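/- Let k ≥ 2 and r ≥ 1 be integers, let n = k·r, and let P be a set of n points in a real inner product space. Then there exist a partition of P into k nonempty subsets P_1, …, P_k and a point c such that for every i ∈ {1,…,k} the closed ball of radius √(2/r)·diam P centered at c intersects the convex hull of P_i. -/

import Mathlib

open Finset

/-- Key combinatorial lemma: among all balanced assignments of `k*r` points to `k`
groups of size `r`, one minimizing the sum of squared norms of group sums has all
pairwise differences of group sums bounded. -/
lemma tverberg_key {E : Type*} [NormedAddCommGroup E] [InnerProductSpace ℝ E]
    {ι : Type*} [Fintype ι] [DecidableEq ι]
    (k r : ℕ) (hk : 0 < k) (hr : 0 < r) (f : ι → E) (D : ℝ)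
    (hD : ∀ x y : ι, ‖f x - f y‖ ≤ D)
    (hcard : Fintype.card ι = k * r) :
    ∃ g : ι → Fin k, (∀ i, (Finset.univ.filter fun x => g x = i).card = r) ∧
      ∀ i j : Fin k,
        ‖(∑ x ∈ Finset.univ.filter fun x => g x = i, f x) -
          (∑ x ∈ Finset.univ.filter fun x => g x = j, f x)‖ ^ 2 ≤ (r : ℝ) * D ^ 2 := by
  classical
  have hι : Nonempty ι := by
    rw [← Fintype.card_pos_iff, hcard]; positivity
  have hD0 : 0 ≤ D := le_trans (by simp) (hD hι.some hι.some)
  set S : (ι → Fin k) → Fin k → E := fun g i => ∑ x ∈ Finset.univ.filter fun x => g x = i, f x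
    with hS
  set bal : (ι → Fin k) → Prop :=
    fun g => ∀ i, (Finset.univ.filter fun x => g x = i).card = r with hbal
  set Φ : (ι → Fin k) → ℝ := fun g => ∑ i, ‖S g i‖ ^ 2 with hΦ
  -- a balanced assignment exists
  have hB : ∃ g, bal g := by
    have : Fintype.card ι = Fintype.card (Fin k × Fin r) := by simp [hcard]
    obtain e := Fintype.equivOfCardEq this
    refine ⟨fun x => (e x).1, fun i => ?_⟩
    rw [Finset.card_bij (fun x _ => (e x).2) ?_ ?_ ?_]
    · exact Finset.card_fin r
    · intros; exact Finset.mem_univ _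
    · intro x hx y hy h
      simp only [Finset.mem_filter] at hx hy
      exact e.injective (Prod.ext (hx.2.trans hy.2.symm) h)
    · intro y _
      exact ⟨e.symm (i, y), by simp, by simp⟩
  -- choose a balanced assignment minimizing Φ
  obtain ⟨g, hgB, hgmin⟩ :=
    Finset.exists_min_image (Finset.univ.filter bal) Φ
      (by obtain ⟨g, hg⟩ := hB; exact ⟨g, Finset.mem_filter.2 ⟨Finset.mem_univ _, hg⟩⟩)
  have hgbal : bal g := (Finset.mem_filter.1 hgB).2
  refine ⟨g, hgbal, fun i j => ?_⟩
  rcases eq_or_ne i j with rfl | hij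
  · simp; positivity
  -- the swap inequality
  have hswap : ∀ a b : ι, g a = i → g b = j →
      -(D ^ 2) ≤ inner ℝ (S g i - S g j) (f b - f a) := by
    intro a b ha hb
    have hab : a ≠ b := by rintro rfl; exact hij (ha ▸ hb)
    set g' : ι → Fin k := fun x => g (Equiv.swap a b x) with hg'
    -- g' is balanced and S g' computed
    have hfib : ∀ l, (Finset.univ.filter fun x => g' x = l) =
        (Finset.univ.filter fun x => g x = l).image (Equiv.swap a b) := by
      intro l
      ext x
      simp only [Finset.mem_filter, Finset.mem_image, Finset.mem_univ, true_and, hg']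
      constructor
      · intro h; exact ⟨Equiv.swap a b x, h, Equiv.swap_apply_self _ _ _⟩
      · rintro ⟨y, hy, rfl⟩; rwa [Equiv.swap_apply_self]
    have hg'bal : bal g' := by
      intro l
      rw [hfib, Finset.card_image_of_injective _ (Equiv.swap a b).injective]
      exact hgbal l
    have hS' : ∀ l, S g' l = S g l + (if g a = l then f b - f a else 0)
        + (if g b = l then f a - f b else 0) := by
      intro l
      rw [hS]
      simp only
      rw [hfib, Finset.sum_image (fun x _ y _ h => (Equiv.swap a b).injective h)]
      have : ∀ x ∈ Finset.univ.filter fun x => g x = l,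
          f (Equiv.swap a b x) = f x + ((if x = a then f b - f a else 0)
            + (if x = b then f a - f b else 0)) := by
        intro x _
        rcases eq_or_ne x a with rfl | hxa
        · simp [Equiv.swap_apply_left, hab]
        rcases eq_or_ne x b with rfl | hxb
        · simp [Equiv.swap_apply_right, hxa]
        · rw [Equiv.swap_apply_of_ne_of_ne hxa hxb, if_neg hxa, if_neg hxb]
          simp
      rw [Finset.sum_congr rfl this, Finset.sum_add_distrib, Finset.sum_add_distrib,
        Finset.sum_ite_eq' _ a, Finset.sum_ite_eq' _ b]
      simp only [Finset.mem_filter, Finset.mem_univ, true_and]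
      rw [add_assoc]
    -- Φ g ≤ Φ g'
    have hmin : Φ g ≤ Φ g' :=
      hgmin g' (Finset.mem_filter.2 ⟨Finset.mem_univ _, hg'bal⟩)
    -- compute Φ g' - Φ g
    have hdiff : Φ g' - Φ g
        = 2 * inner ℝ (S g i - S g j) (f b - f a) + 2 * ‖f b - f a‖ ^ 2 := by
      rw [hΦ]
      simp only
      rw [← Finset.sum_sub_distrib]
      have hvanish : ∀ l ∈ Finset.univ, l ∉ ({i, j} : Finset (Fin k)) →
          ‖S g' l‖ ^ 2 - ‖S g l‖ ^ 2 = 0 := by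
        intro l _ hl
        simp only [Finset.mem_insert, Finset.mem_singleton, not_or] at hl
        rw [hS' l, if_neg (by rw [ha]; exact fun h => hl.1 h.symm),
          if_neg (by rw [hb]; exact fun h => hl.2 h.symm)]
        simp
      rw [← Finset.sum_subset (Finset.subset_univ {i, j}) hvanish,
        Finset.sum_pair hij, hS' i, hS' j, if_pos ha, if_neg (by rw [hb]; exact hij.symm),
        if_neg (by rw [ha]; exact hij), if_pos hb]
      simp only [add_zero, zero_add]
      rw [norm_add_sq_real, norm_add_sq_real]
      have h1 : inner ℝ (S g j) (f a - f b) = -(inner ℝ (S g j) (f b - f a) : ℝ) := by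
        rw [← inner_neg_right]; congr 1; abel
      have h2 : ‖f a - f b‖ = ‖f b - f a‖ := norm_sub_rev _ _
      rw [h1, h2, inner_sub_left]
      ring
    have := hdiff ▸ sub_nonneg.2 hmin
    nlinarith [norm_nonneg (f b - f a), hD b a, sq_nonneg (‖f b - f a‖ - D)]
  -- sum the swap inequality over all pairs
  set v : E := S g i - S g j with hv
  have hA : (Finset.univ.filter fun x => g x = i).card = r := hgbal i
  have hBc : (Finset.univ.filter fun x => g x = j).card = r := hgbal j
  have hsum : ∑ a ∈ Finset.univ.filter (fun x => g x = i),
      ∑ b ∈ Finset.univ.filter (fun x => g x = j), (inner ℝ v (f b - f a) : ℝ)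
      = -((r : ℝ) * ‖v‖ ^ 2) := by
    have : ∀ a ∈ Finset.univ.filter (fun x => g x = i),
        ∑ b ∈ Finset.univ.filter (fun x => g x = j), (inner ℝ v (f b - f a) : ℝ)
        = inner ℝ v (S g j) - (r : ℝ) * inner ℝ v (f a) := by
      intro a _
      rw [← inner_sum, Finset.sum_sub_distrib, inner_sub_right, Finset.sum_const, hBc,
        ← Nat.cast_smul_eq_nsmul ℝ, real_inner_smul_right]
    rw [Finset.sum_congr rfl this, Finset.sum_sub_distrib, Finset.sum_const, hA,
      ← Finset.mul_sum, ← inner_sum]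
    have hSi : (∑ x ∈ Finset.univ.filter (fun x => g x = i), f x) = S g i := rfl
    have hSj : (∑ x ∈ Finset.univ.filter (fun x => g x = j), f x) = S g j := rfl
    rw [hSi]
    have : (r • (inner ℝ v (S g j) : ℝ)) = (r : ℝ) * inner ℝ v (S g j) := by
      rw [nsmul_eq_mul]
    rw [this, ← mul_sub, ← inner_sub_right]
    have hvv : (inner ℝ v (S g j - S g i) : ℝ) = -(‖v‖ ^ 2) := by
      have hneg : S g j - S g i = -v := by rw [hv]; abel
      rw [hneg, inner_neg_right, real_inner_self_eq_norm_sq]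
    rw [hvv]; ring
  have hlow : -((r : ℝ) * (r : ℝ) * D ^ 2) ≤ -((r : ℝ) * ‖v‖ ^ 2) := by
    rw [← hsum]
    calc -((r : ℝ) * (r : ℝ) * D ^ 2)
        = ∑ _a ∈ Finset.univ.filter (fun x => g x = i),
            ∑ _b ∈ Finset.univ.filter (fun x => g x = j), -(D ^ 2) := by
          rw [Finset.sum_const, Finset.sum_const, hA, hBc]
          simp [nsmul_eq_mul]; ring
      _ ≤ _ := by
          refine Finset.sum_le_sum fun a ha => Finset.sum_le_sum fun b hb => ?_
          simp only [Finset.mem_filter] at ha hb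
          exact hswap a b ha.2 hb.2
  have hrpos : (0:ℝ) < r := by exact_mod_cast hr
  nlinarith [hlow]

/-- **No-dimensional Tverberg theorem with radius `√(2/r)·diam P`**
(Har-Peled, Robson). For integers `k ≥ 2`, `r ≥ 1` and a set `P` of `n = k·r` points
in a real inner product space, there exist a partition of `P` into `k` nonempty
subsets and a point `c` such that the closed ball of radius `√(2/r)·diam P` centered
at `c` intersects the convex hull of every part. -/
theorem no_dimensional_tverberg_har_peled_robson
    {E : Type*} [NormedAddCommGroup E] [InnerProductSpace ℝ E] [DecidableEq E]
    (k r : ℕ) (hk : 2 ≤ k) (hr : 1 ≤ r)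
    (P : Finset E) (hP : P.card = k * r) :
    ∃ Pparts : Fin k → Finset E,
      (∀ i, (Pparts i).Nonempty) ∧
      (∀ i i', i ≠ i' → Disjoint (Pparts i) (Pparts i')) ∧
      Finset.univ.biUnion Pparts = P ∧
      ∃ c : E, ∀ i, ∃ p ∈ convexHull ℝ (↑(Pparts i) : Set E),
        dist p c ≤ Real.sqrt (2 / (r : ℝ)) * Metric.diam (↑P : Set E) := by
  classical
  set D := Metric.diam (↑P : Set E) with hDdef
  have hD0 : 0 ≤ D := Metric.diam_nonneg
  have hkpos : 0 < k := lt_of_lt_of_le two_pos hk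
  have hrpos : 0 < r := hr
  have hrR : (0:ℝ) < r := by exact_mod_cast hrpos
  have hkR : (0:ℝ) < k := by exact_mod_cast hkpos
  have hD : ∀ x y : ↥P, ‖(x : E) - (y : E)‖ ≤ D := by
    intro x y
    rw [← dist_eq_norm]
    exact Metric.dist_le_diam_of_mem P.finite_toSet.isBounded x.2 y.2
  obtain ⟨g, hgbal, hgkey⟩ :=
    tverberg_key k r hkpos hrpos (fun x : ↥P => (x : E)) D hD
      (by rw [Fintype.card_coe, hP])
  set S : Fin k → E := fun i => ∑ x ∈ Finset.univ.filter fun x => g x = i, (x : E) with hS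
  set μ : Fin k → E := fun i => (r : ℝ)⁻¹ • S i with hμ
  set Pparts : Fin k → Finset E :=
    fun i => (Finset.univ.filter fun x => g x = i).image (Subtype.val) with hPparts
  have hcard : ∀ i, (Pparts i).card = r := by
    intro i
    rw [hPparts]
    simp only
    rw [Finset.card_image_of_injective _ Subtype.val_injective]
    exact hgbal i
  have hsum : ∀ i, ∑ x ∈ Pparts i, x = S i := by
    intro i
    rw [hPparts, hS]
    simp only
    rw [Finset.sum_image (fun x _ y _ h => Subtype.val_injective h)]
  -- the pairwise bound on the μ's
  have hbound : ∀ i j, ‖μ i - μ j‖ ≤ Real.sqrt (2 / (r : ℝ)) * D := by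
    intro i j
    have h1 : ‖μ i - μ j‖ = (r : ℝ)⁻¹ * ‖S i - S j‖ := by
      rw [hμ]
      simp only
      rw [← smul_sub, norm_smul, Real.norm_eq_abs, abs_of_pos (by positivity)]
    have h2 : ‖S i - S j‖ ≤ Real.sqrt ((r:ℝ)) * D := by
      have := hgkey i j
      nlinarith [Real.sq_sqrt hrR.le, Real.sqrt_nonneg (r:ℝ), norm_nonneg (S i - S j),
        mul_nonneg (Real.sqrt_nonneg (r:ℝ)) hD0]
    rw [h1]
    calc (r : ℝ)⁻¹ * ‖S i - S j‖ ≤ (r : ℝ)⁻¹ * (Real.sqrt (r:ℝ) * D) := by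
          exact mul_le_mul_of_nonneg_left h2 (by positivity)
      _ ≤ Real.sqrt (2 / (r : ℝ)) * D := by
          have hss : Real.sqrt (r:ℝ) * Real.sqrt (r:ℝ) = (r:ℝ) := Real.mul_self_sqrt hrR.le
          have hspos : 0 < Real.sqrt (r:ℝ) := Real.sqrt_pos.2 hrR
          have key : (r : ℝ)⁻¹ * Real.sqrt (r:ℝ) ≤ Real.sqrt (2 / (r : ℝ)) := by
            have h3 : (r : ℝ)⁻¹ * Real.sqrt (r:ℝ) = (Real.sqrt (r:ℝ))⁻¹ := by
              rw [← hss]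
              field_simp
              rw [Real.sqrt_sq hspos.le]
            rw [h3, ← Real.sqrt_inv]
            apply Real.sqrt_le_sqrt
            rw [div_eq_mul_inv]
            nlinarith [inv_pos.2 hrR]
          calc (r : ℝ)⁻¹ * (Real.sqrt (r:ℝ) * D) = ((r : ℝ)⁻¹ * Real.sqrt (r:ℝ)) * D := by ring
            _ ≤ Real.sqrt (2 / (r : ℝ)) * D := mul_le_mul_of_nonneg_right key hD0
  set c : E := (k : ℝ)⁻¹ • ∑ j, μ j with hc
  refine ⟨Pparts, ?_, ?_, ?_, c, ?_⟩
  · intro i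
    rw [← Finset.card_pos, hcard i]
    exact hrpos
  · intro i i' hii'
    rw [Finset.disjoint_left]
    intro x hx hx'
    rw [hPparts] at hx hx'
    simp only [Finset.mem_image, Finset.mem_filter, Finset.mem_univ, true_and] at hx hx'
    obtain ⟨y, hy, rfl⟩ := hx
    obtain ⟨z, hz, hzy⟩ := hx'
    rw [Subtype.val_injective hzy] at hz
    exact hii' (hy ▸ hz ▸ rfl)
  · ext x
    simp only [Finset.mem_biUnion, Finset.mem_univ, true_and, hPparts,
      Finset.mem_image, Finset.mem_filter]
    constructor
    · rintro ⟨i, y, _, rfl⟩; exact y.2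
    · intro hx
      exact ⟨g ⟨x, hx⟩, ⟨x, hx⟩, rfl, rfl⟩
  · intro i
    refine ⟨μ i, ?_, ?_⟩
    · have hμcm : μ i = (Pparts i).centerMass (fun _ => (1:ℝ)) id := by
        rw [Finset.centerMass]
        simp only [one_smul, Finset.sum_const, smul_eq_mul, mul_one, id]
        rw [hsum i, hcard i]
        simp [hμ, nsmul_eq_mul]
      rw [hμcm]
      exact Finset.centerMass_mem_convexHull _ (fun _ _ => zero_le_one)
        (by rw [Finset.sum_const, hcard i]; simp; positivity)
        (fun x hx => Finset.mem_coe.2 hx)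
    · rw [dist_eq_norm]
      have hsplit : μ i - c = (k : ℝ)⁻¹ • ∑ j, (μ i - μ j) := by
        rw [Finset.sum_sub_distrib, smul_sub, hc, Finset.sum_const, Finset.card_univ,
          Fintype.card_fin, ← Nat.cast_smul_eq_nsmul ℝ, smul_smul,
          inv_mul_cancel₀ (ne_of_gt hkR), one_smul]
      rw [hsplit, norm_smul, Real.norm_eq_abs, abs_of_pos (by positivity)]
      calc (k : ℝ)⁻¹ * ‖∑ j, (μ i - μ j)‖
          ≤ (k : ℝ)⁻¹ * ∑ j, ‖μ i - μ j‖ :=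
            mul_le_mul_of_nonneg_left (norm_sum_le _ _) (by positivity)
        _ ≤ (k : ℝ)⁻¹ * ((k : ℝ) * (Real.sqrt (2 / (r : ℝ)) * D)) := by
            refine mul_le_mul_of_nonneg_left ?_ (by positivity)
            calc ∑ j, ‖μ i - μ j‖ ≤ ∑ _j : Fin k, Real.sqrt (2 / (r : ℝ)) * D :=
                  Finset.sum_le_sum fun j _ => hbound i j
              _ = (k : ℝ) * (Real.sqrt (2 / (r : ℝ)) * D) := by
                  rw [Finset.sum_const, Finset.card_univ, Fintype.card_fin, nsmul_eq_mul]
        _ = Real.sqrt (2 / (r : ℝ)) * D := by field_simp
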